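/- arXiv:2509.18417 — 4 statements merged into one kernel-verified Lean document; each statement's English description precedes it below -/
import Mathlib

section
/- For any finite simple connected graph G and any real number α, the spectral radius λ(G) of the adjacency matrix satisfies λ(G) ≥ 2·R_α(G) / Σ_{v∈V} d_v^{2α}, where R_α(G) = Σ_{uv∈E} (d_u·d_v)^α is the general Randić index. -/
open Finset Matrix

variable {V : Type*}

/-- The product of endpoint degrees, raised to power `α`, as a function on `Sym2 V`. -/
noncomputable def degProd [Fintype V] (G : SimpleGraph V) [DecidableRel G.Adj] (α : ℝ) :
    Sym2 V → ℝ :=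
  Sym2.lift ⟨fun u v => ((G.degree u : ℝ) * (G.degree v : ℝ)) ^ α,
    fun u v => by simp [mul_comm]⟩

/-- The general Randić index `R_α(G) = ∑_{uv ∈ E} (d_u d_v)^α`. -/
noncomputable def randic [Fintype V] [DecidableEq V] (G : SimpleGraph V) [DecidableRel G.Adj]
    (α : ℝ) : ℝ :=
  ∑ e ∈ G.edgeFinset, degProd G α e

/-- `lam` is the largest (real) eigenvalue of the symmetric matrix `A`,
i.e. the spectral radius for an adjacency matrix. -/
def IsMaxEigenvalue [Fintype V] (A : Matrix V V ℝ) (lam : ℝ) : Prop :=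
  (∃ x : V → ℝ, x ≠ 0 ∧ A.mulVec x = lam • x) ∧
  ∀ (μ : ℝ) (x : V → ℝ), x ≠ 0 → A.mulVec x = μ • x → μ ≤ lam

section Aux

variable [Fintype V] [DecidableEq V]

/-- Rayleigh quotient bound from being the max eigenvalue of a Hermitian matrix. -/
lemma rayleigh_le_max (A : Matrix V V ℝ) (hA : A.IsHermitian) (lam : ℝ)
    (h : ∀ (μ : ℝ) (x : V → ℝ), x ≠ 0 → A.mulVec x = μ • x → μ ≤ lam) (x : V → ℝ) :
    x ⬝ᵥ A.mulVec x ≤ lam * (x ⬝ᵥ x) := by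
  classical
  set U : Matrix V V ℝ := (hA.eigenvectorUnitary : Matrix V V ℝ) with hU
  have hUs : star U * U = 1 := Unitary.coe_star_mul_self hA.eigenvectorUnitary
  have hsU : U * star U = 1 := Unitary.coe_mul_star_self hA.eigenvectorUnitary
  have hμ : ∀ i : V, hA.eigenvalues i ≤ lam := fun i =>
    h _ _ (fun h0 => hA.eigenvectorBasis.orthonormal.ne_zero i (by ext j; simpa using congrFun h0 j))
      (hA.mulVec_eigenvectorBasis i)
  have hspec : A = U * Matrix.diagonal hA.eigenvalues * star U := by
    have := hA.spectral_theorem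
    simpa using this
  set y : V → ℝ := (star U).mulVec x with hy
  have hAx : A.mulVec x = U.mulVec ((Matrix.diagonal hA.eigenvalues).mulVec y) := by
    rw [hy, Matrix.mulVec_mulVec, Matrix.mulVec_mulVec, ← hspec]
  have hstarU : star U = U.transpose := Matrix.conjTranspose_eq_transpose_of_trivial U ▸ rfl
  have hdot : ∀ z : V → ℝ, x ⬝ᵥ U.mulVec z = y ⬝ᵥ z := by
    intro z
    rw [hy, hstarU, Matrix.mulVec_transpose, Matrix.dotProduct_mulVec]
  have hxAx : x ⬝ᵥ A.mulVec x = ∑ i, hA.eigenvalues i * (y i)^2 := by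
    rw [hAx, hdot, dotProduct]
    refine Finset.sum_congr rfl fun i _ => ?_
    rw [Matrix.mulVec_diagonal]
    ring
  have hxx : x ⬝ᵥ x = ∑ i, (y i)^2 := by
    have h0 : y ⬝ᵥ y = x ⬝ᵥ x := by
      have h1 := hdot y
      rw [hy, Matrix.mulVec_mulVec, hsU, Matrix.one_mulVec] at h1
      exact h1.symm
    rw [← h0, dotProduct]
    exact Finset.sum_congr rfl fun i _ => (sq (y i)).symm
  rw [hxAx, hxx, Finset.mul_sum]
  exact Finset.sum_le_sum fun i _ => mul_le_mul_of_nonneg_right (hμ i) (sq_nonneg _)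

/-- The maximum eigenvalue of an adjacency matrix is nonnegative. -/
lemma max_eig_nonneg [Nonempty V] (G : SimpleGraph V) [DecidableRel G.Adj] (lam : ℝ)
    (h : ∀ (μ : ℝ) (x : V → ℝ), x ≠ 0 → (G.adjMatrix ℝ).mulVec x = μ • x → μ ≤ lam) :
    0 ≤ lam := by
  classical
  have hA : (G.adjMatrix ℝ).IsHermitian := by
    rw [Matrix.IsHermitian, Matrix.conjTranspose_eq_transpose_of_trivial]
    exact G.isSymm_adjMatrix
  have hμ : ∀ i : V, hA.eigenvalues i ≤ lam := fun i =>
    h _ _ (fun h0 => hA.eigenvectorBasis.orthonormal.ne_zero i (by ext j; simpa using congrFun h0 j))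
      (hA.mulVec_eigenvectorBasis i)
  have htr : ∑ i, hA.eigenvalues i = 0 := by
    have hspec : (G.adjMatrix ℝ) =
        (hA.eigenvectorUnitary : Matrix V V ℝ) * Matrix.diagonal hA.eigenvalues *
          star (hA.eigenvectorUnitary : Matrix V V ℝ) := by
      have := hA.spectral_theorem
      simpa using this
    have := congrArg Matrix.trace hspec
    rw [SimpleGraph.trace_adjMatrix, Matrix.trace_mul_cycle,
      Unitary.coe_star_mul_self hA.eigenvectorUnitary, one_mul, Matrix.trace_diagonal] at this
    exact this.symm
  by_contra hneg
  push_neg at hneg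
  have : ∑ i : V, hA.eigenvalues i < 0 := by
    calc ∑ i : V, hA.eigenvalues i ≤ ∑ _i : V, lam := Finset.sum_le_sum fun i _ => hμ i
    _ = (Fintype.card V : ℝ) * lam := by rw [Finset.sum_const, nsmul_eq_mul]; rfl
    _ < 0 := mul_neg_of_pos_of_neg (by exact_mod_cast Fintype.card_pos) hneg
  rw [htr] at this
  exact lt_irrefl 0 this

/-- Sum of a function of edges over all darts is twice the sum over edges. -/
lemma sum_dart_eq_twice (G : SimpleGraph V) [DecidableRel G.Adj] (f : Sym2 V → ℝ) :
    ∑ d : G.Dart, f d.edge = 2 * ∑ e ∈ G.edgeFinset, f e := by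
  classical
  rw [← Finset.sum_fiberwise_of_maps_to (g := SimpleGraph.Dart.edge) (t := G.edgeFinset)
    (fun d _ => by rw [SimpleGraph.mem_edgeFinset]; exact d.edge_mem), Finset.mul_sum]
  refine Finset.sum_congr rfl fun e he => ?_
  have hcard : (Finset.univ.filter (fun d : G.Dart => d.edge = e)).card = 2 :=
    G.dart_edge_fiber_card e (SimpleGraph.mem_edgeFinset.mp he)
  calc ∑ d ∈ Finset.univ.filter (fun d : G.Dart => d.edge = e), f d.edge
      = ∑ _d ∈ Finset.univ.filter (fun d : G.Dart => d.edge = e), f e :=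
        Finset.sum_congr rfl fun d hd => by rw [(Finset.mem_filter.mp hd).2]
    _ = 2 * f e := by rw [Finset.sum_const, hcard]; norm_num

end Aux

theorem spectral_radius_ge_randic_bound
    [Fintype V] [DecidableEq V] [Nonempty V] (G : SimpleGraph V) [DecidableRel G.Adj]
    (hconn : G.Connected) (α lam : ℝ)
    (hlam : IsMaxEigenvalue (G.adjMatrix ℝ) lam) :
    lam ≥ 2 * randic G α / ∑ v : V, (G.degree v : ℝ) ^ (2 * α) := by
  classical
  obtain ⟨-, hmax⟩ := hlam
  by_cases hE : G.edgeFinset = ∅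
  · rw [randic, hE, Finset.sum_empty, mul_zero, zero_div]
    exact max_eig_nonneg G lam hmax
  -- every vertex has positive degree
  have hdeg : ∀ v : V, 0 < G.degree v := by
    intro v
    obtain ⟨e, he⟩ := Finset.nonempty_iff_ne_empty.mpr hE
    rw [SimpleGraph.mem_edgeFinset] at he
    induction e with
    | h a b =>
      rw [SimpleGraph.mem_edgeSet] at he
      obtain ⟨u, hu⟩ : ∃ u, u ≠ v := by
        rcases eq_or_ne a v with rfl | h
        · exact ⟨b, fun hb => G.loopless.irrefl a (hb ▸ he)⟩
        · exact ⟨a, h⟩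
      obtain ⟨w⟩ := hconn v u
      cases w with
      | nil => exact absurd rfl hu.symm
      | cons h p => exact (G.degree_pos_iff_exists_adj v).mpr ⟨_, h⟩
  set x : V → ℝ := fun v => (G.degree v : ℝ) ^ α with hx
  have hxpos : ∀ v, 0 < x v := fun v =>
    Real.rpow_pos_of_pos (by exact_mod_cast hdeg v) α
  have hA : (G.adjMatrix ℝ).IsHermitian := by
    rw [Matrix.IsHermitian, Matrix.conjTranspose_eq_transpose_of_trivial]
    exact G.isSymm_adjMatrix
  -- numerator identity
  have hnum : x ⬝ᵥ (G.adjMatrix ℝ).mulVec x = 2 * randic G α := by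
    have h1 : x ⬝ᵥ (G.adjMatrix ℝ).mulVec x
        = ∑ u, ∑ v ∈ G.neighborFinset u, x u * x v := by
      rw [dotProduct]
      refine Finset.sum_congr rfl fun u _ => ?_
      rw [SimpleGraph.adjMatrix_mulVec_apply, Finset.mul_sum]
    have h2 : ∑ d : G.Dart, degProd G α d.edge
        = ∑ u, ∑ v ∈ G.neighborFinset u, x u * x v := by
      rw [Fintype.sum_equiv
        ({ toFun := fun s : (Σ v, G.neighborSet v) => (⟨(s.fst, s.snd), s.snd.property⟩ : G.Dart)
           invFun := fun d => ⟨d.fst, d.snd, d.adj⟩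
           left_inv := fun s => by ext <;> simp
           right_inv := fun d => by ext <;> simp } : (Σ v, G.neighborSet v) ≃ G.Dart).symm
        _ (fun s => x s.fst * x s.snd.val)]
      · rw [← Finset.univ_sigma_univ, Finset.sum_sigma]
        refine Finset.sum_congr rfl fun u _ => ?_
        rw [SimpleGraph.neighborFinset_def, ← Finset.sum_set_coe (G.neighborSet u)]
      · intro d
        simp only [Equiv.coe_fn_symm_mk, SimpleGraph.Dart.edge, degProd, Sym2.lift_mk]
        rw [hx]
        exact Real.mul_rpow (Nat.cast_nonneg _) (Nat.cast_nonneg _)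
    rw [h1, ← h2, sum_dart_eq_twice, randic]
  -- denominator identity
  have hden : x ⬝ᵥ x = ∑ v : V, (G.degree v : ℝ) ^ (2 * α) := by
    rw [dotProduct]
    refine Finset.sum_congr rfl fun v _ => ?_
    rw [hx]
    rw [← Real.rpow_add (by exact_mod_cast hdeg v)]
    ring_nf
  have hDpos : 0 < ∑ v : V, (G.degree v : ℝ) ^ (2 * α) :=
    Finset.sum_pos (fun v _ => Real.rpow_pos_of_pos (by exact_mod_cast hdeg v) _)
      Finset.univ_nonempty
  rw [ge_iff_le, div_le_iff₀ hDpos, ← hnum, ← hden]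
  exact rayleigh_le_max _ hA lam hmax x
end

section
/- For any finite simple connected graph G and any real α, the normalized Randić function R̄_α := (Σ_{uv∈E} (d_u d_v)^α) / (Σ_{v∈V} d_v^{2α}) satisfies R̄_α ≤ λ(G)/2. -/
open Finset

variable {V : Type*}

/-- Summing a function of the edge over all darts gives twice the sum over edges. -/
lemma sum_darts_eq_two_mul [Fintype V] [DecidableEq V] (G : SimpleGraph V)
    [DecidableRel G.Adj] (f : Sym2 V → ℝ) :
    ∑ d : G.Dart, f d.edge = 2 * ∑ e ∈ G.edgeFinset, f e := by
  rw [← Finset.sum_fiberwise_of_maps_to'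
    (g := fun d : G.Dart => d.edge) (t := G.edgeFinset)
    (fun d _ => SimpleGraph.mem_edgeFinset.2 d.edge_mem) f, Finset.mul_sum]
  refine Finset.sum_congr rfl fun e he => ?_
  rw [Finset.sum_const, nsmul_eq_mul]
  congr 1
  have := G.dart_edge_fiber_card e (SimpleGraph.mem_edgeFinset.1 he)
  simpa using congrArg (fun n : ℕ => (n : ℝ)) this

/-- The quadratic form of the adjacency matrix as twice a sum over edges. -/
lemma adj_double_sum_eq [Fintype V] [DecidableEq V] (G : SimpleGraph V)
    [DecidableRel G.Adj] (f : Sym2 V → ℝ) :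
    (∑ u : V, ∑ v : V, if G.Adj u v then f s(u, v) else 0)
      = 2 * ∑ e ∈ G.edgeFinset, f e := by
  rw [← sum_darts_eq_two_mul]
  have h1 : ∀ u : V, (∑ v : V, if G.Adj u v then f s(u, v) else 0)
      = ∑ v ∈ G.neighborFinset u, f s(u, v) := by
    intro u
    rw [SimpleGraph.neighborFinset_eq_filter, Finset.sum_filter]
  simp_rw [h1]
  rw [← Finset.sum_sigma (univ : Finset V) (fun u => G.neighborFinset u)
    (fun p => f s(p.1, p.2))]
  refine Finset.sum_bij'
    (fun p hp => (⟨(p.1, p.2), by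
      simpa using (Finset.mem_sigma.1 hp).2⟩ : G.Dart))
    (fun d _ => ⟨d.fst, d.snd⟩) ?_ ?_ ?_ ?_ ?_
  · intro p hp; exact Finset.mem_univ _
  · intro d hd
    simp [Finset.mem_sigma, SimpleGraph.mem_neighborFinset, d.adj]
  · intro p hp; rfl
  · intro d hd; rfl
  · intro p hp; rfl

/-- Rayleigh-quotient bound: if every eigenvalue of a symmetric real matrix is at most `lam`,
then `xᵀ A x ≤ lam ‖x‖²` for every vector `x`. -/
lemma rayleigh_le [Fintype V] [DecidableEq V] {A : Matrix V V ℝ} (hA : A.IsHermitian)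
    {lam : ℝ} (h : ∀ (μ : ℝ) (x : V → ℝ), x ≠ 0 → A.mulVec x = μ • x → μ ≤ lam)
    (x : V → ℝ) : dotProduct x (A.mulVec x) ≤ lam * dotProduct x x := by
  have hMH : (lam • (1 : Matrix V V ℝ) - A).IsHermitian := by
    unfold Matrix.IsHermitian at hA ⊢
    rw [Matrix.conjTranspose_sub, Matrix.conjTranspose_smul, Matrix.conjTranspose_one, hA]
    simp
  have hpsd : (lam • (1 : Matrix V V ℝ) - A).PosSemidef := by
    refine (Matrix.IsHermitian.posSemidef_iff_eigenvalues_nonneg hMH).2 fun i => ?_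
    have hv := hMH.mulVec_eigenvectorBasis i
    have hv0 : ⇑(hMH.eigenvectorBasis i) ≠ 0 := by
      intro h0
      exact hMH.eigenvectorBasis.orthonormal.ne_zero i (by ext j; exact congrFun h0 j)
    rw [Matrix.sub_mulVec, Matrix.smul_mulVec, Matrix.one_mulVec] at hv
    have hAv : A.mulVec (⇑(hMH.eigenvectorBasis i))
        = (lam - hMH.eigenvalues i) • ⇑(hMH.eigenvectorBasis i) := by
      ext j
      have := congrFun hv j
      simp only [Pi.sub_apply, Pi.smul_apply, smul_eq_mul] at this ⊢
      linarith
    have := h _ _ hv0 hAv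
    exact (by linarith : (0 : ℝ) ≤ hMH.eigenvalues i)
  have h2 := hpsd.dotProduct_mulVec_nonneg x
  have hstar : star x = x := rfl
  rw [hstar, Matrix.sub_mulVec, Matrix.smul_mulVec, Matrix.one_mulVec,
    dotProduct_sub, dotProduct_smul] at h2
  simp only [smul_eq_mul] at h2
  linarith

theorem normalized_randic_le_half_spectral_radius
    [Fintype V] [DecidableEq V] [Nonempty V] (G : SimpleGraph V) [DecidableRel G.Adj]
    (hconn : G.Connected) (hdeg : ∀ v : V, 1 ≤ G.degree v)
    (α lam : ℝ) (hlam : IsMaxEigenvalue (G.adjMatrix ℝ) lam) :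
    randic G α / (∑ v : V, (G.degree v : ℝ) ^ (2 * α)) ≤ lam / 2 := by
  obtain ⟨-, hmax⟩ := hlam
  have hAH : (G.adjMatrix ℝ).IsHermitian := by
    unfold Matrix.IsHermitian
    ext i j
    simp only [Matrix.conjTranspose_apply, SimpleGraph.adjMatrix_apply, star_trivial]
    by_cases h : G.Adj i j
    · simp [h, h.symm]
    · simp only [h, if_false]
      exact if_neg fun hji : G.Adj j i => h hji.symm
  set x : V → ℝ := fun v => (G.degree v : ℝ) ^ α with hx
  have key := rayleigh_le hAH hmax x
  have hdpos : ∀ v : V, (0 : ℝ) < (G.degree v : ℝ) := fun v => by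
    exact_mod_cast Nat.lt_of_lt_of_le Nat.zero_lt_one (hdeg v)
  have hxx : dotProduct x x = ∑ v : V, (G.degree v : ℝ) ^ (2 * α) := by
    unfold dotProduct
    refine Finset.sum_congr rfl fun v _ => ?_
    rw [hx]
    dsimp only
    rw [two_mul, Real.rpow_add (hdpos v)]
  have hAx : dotProduct x ((G.adjMatrix ℝ).mulVec x) = 2 * randic G α := by
    rw [SimpleGraph.dotProduct_mulVec_adjMatrix]
    have hite : ∀ u v : V,
        (if G.Adj u v then x u * x v else 0)
          = (if G.Adj u v then degProd G α s(u, v) else 0) := by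
      intro u v
      by_cases h : G.Adj u v
      · simp only [h, if_true, hx, degProd, Sym2.lift_mk]
        rw [Real.mul_rpow (hdpos u).le (hdpos v).le]
      · simp [h]
    simp_rw [hite]
    exact adj_double_sum_eq G (degProd G α)
  have hS : 0 < ∑ v : V, (G.degree v : ℝ) ^ (2 * α) :=
    Finset.sum_pos (fun v _ => Real.rpow_pos_of_pos (hdpos v) _) Finset.univ_nonempty
  rw [div_le_div_iff₀ hS two_pos]
  rw [hxx, hAx] at key
  linarith
end

section
/- Define, for a finite simple connected graph G with all degrees positive, the probability measures p_E^α(uv) = (d_u d_v)^α / Σ_{uv∈E}(d_u d_v)^α on edges and p_V^α(v) = d_v^{2α} / Σ_{v∈V} d_v^{2α} on vertices, with Shannon entropies H_E^α and H_V^α respectively, and the normalized Randić function R̄_α = (Σ_{uv∈E}(d_u d_v)^α)/(Σ_{v∈V} d_v^{2α}). Then for all α ≠ 0, the derivative identity (d/dα) log R̄_α = (1/α)·(log R̄_α + H_V^α − H_E^α) holds. -/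
open Finset

variable {V : Type*}

/-- The vertex normalization `∑_{v ∈ V} d_v^{2α}`. -/
noncomputable def vertexSum [Fintype V] (G : SimpleGraph V) [DecidableRel G.Adj] (α : ℝ) : ℝ :=
  ∑ v : V, (G.degree v : ℝ) ^ (2 * α)

/-- The normalized Randić function `R̄_α = (∑_{uv∈E} (d_u d_v)^α) / (∑_{v∈V} d_v^{2α})`. -/
noncomputable def normRandic [Fintype V] [DecidableEq V] (G : SimpleGraph V)
    [DecidableRel G.Adj] (α : ℝ) : ℝ :=
  randic G α / vertexSum G α

/-- Shannon entropy `H_E^α` of the edge distribution `p_E^α(uv) = (d_u d_v)^α / R_α`. -/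
noncomputable def edgeEntropy [Fintype V] [DecidableEq V] (G : SimpleGraph V)
    [DecidableRel G.Adj] (α : ℝ) : ℝ :=
  -∑ e ∈ G.edgeFinset,
      (degProd G α e / randic G α) * Real.log (degProd G α e / randic G α)

/-- Shannon entropy `H_V^α` of the vertex distribution `p_V^α(v) = d_v^{2α} / ∑_w d_w^{2α}`. -/
noncomputable def vertexEntropy [Fintype V] (G : SimpleGraph V)
    [DecidableRel G.Adj] (α : ℝ) : ℝ :=
  -∑ v : V,
      ((G.degree v : ℝ) ^ (2 * α) / vertexSum G α) *
        Real.log ((G.degree v : ℝ) ^ (2 * α) / vertexSum G α)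


noncomputable def degBase [Fintype V] (G : SimpleGraph V) [DecidableRel G.Adj] :
    Sym2 V → ℝ :=
  Sym2.lift ⟨fun u v => (G.degree u : ℝ) * (G.degree v : ℝ), fun u v => by simp [mul_comm]⟩

lemma degProd_eq_rpow [Fintype V] (G : SimpleGraph V) [DecidableRel G.Adj] (a : ℝ)
    (e : Sym2 V) : degProd G a e = degBase G e ^ a := by
  induction e using Sym2.ind with
  | _ u v => rfl

theorem deriv_log_normalized_randic
    [Fintype V] [DecidableEq V] [Nonempty V] (G : SimpleGraph V) [DecidableRel G.Adj]
    (hconn : G.Connected) (hE : G.edgeFinset.Nonempty) (hdeg : ∀ v : V, 1 ≤ G.degree v)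
    (α : ℝ) (hα : α ≠ 0) :
    HasDerivAt (fun a : ℝ => Real.log (normRandic G a))
      ((1 / α) * (Real.log (normRandic G α) + vertexEntropy G α - edgeEntropy G α)) α := by
  have hdpos : ∀ v : V, (0 : ℝ) < G.degree v := fun v => by
    exact_mod_cast lt_of_lt_of_le one_pos (by exact_mod_cast hdeg v)
  have hbpos : ∀ e : Sym2 V, 0 < degBase G e := by
    intro e
    induction e using Sym2.ind with
    | _ u v => exact mul_pos (hdpos u) (hdpos v)
  have hRpos : ∀ a : ℝ, 0 < randic G a := fun a =>
    Finset.sum_pos (fun e _ => by rw [degProd_eq_rpow]; exact Real.rpow_pos_of_pos (hbpos e) a) hE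
  have hSpos : ∀ a : ℝ, 0 < vertexSum G a := fun a =>
    Finset.sum_pos (fun v _ => Real.rpow_pos_of_pos (hdpos v) _) Finset.univ_nonempty
  set R' : ℝ := ∑ e ∈ G.edgeFinset, degProd G α e * Real.log (degBase G e) with hR'
  set S' : ℝ := ∑ v : V, (G.degree v : ℝ) ^ (2 * α) * (2 * Real.log (G.degree v)) with hS'
  have hR : HasDerivAt (fun a => randic G a) R' α := by
    apply HasDerivAt.fun_sum
    intro e he
    have := (Real.hasStrictDerivAt_const_rpow (hbpos e) α).hasDerivAt
    simpa [degProd_eq_rpow] using this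
  have hS : HasDerivAt (fun a => vertexSum G a) S' α := by
    apply HasDerivAt.fun_sum
    intro v _
    have h1 : HasDerivAt (fun a : ℝ => (2 : ℝ) * a) 2 α := by
      simpa using (hasDerivAt_id α).const_mul (2 : ℝ)
    have h2 := (Real.hasStrictDerivAt_const_rpow (hdpos v) (2 * α)).hasDerivAt
    have := HasDerivAt.comp α h2 h1
    exact this.congr_deriv (by ring)
  have hmain : HasDerivAt (fun a => Real.log (randic G a) - Real.log (vertexSum G a))
      (R' / randic G α - S' / vertexSum G α) α :=
    (hR.log (hRpos α).ne').sub (hS.log (hSpos α).ne')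
  have hfun : (fun a : ℝ => Real.log (normRandic G a)) =
      fun a => Real.log (randic G a) - Real.log (vertexSum G a) := by
    funext a
    rw [normRandic, Real.log_div (hRpos a).ne' (hSpos a).ne']
  rw [hfun]
  have hHE : edgeEntropy G α = Real.log (randic G α) - α * (R' / randic G α) := by
    have key : ∀ e ∈ G.edgeFinset,
        (degProd G α e / randic G α) * Real.log (degProd G α e / randic G α) =
          (α * (degProd G α e * Real.log (degBase G e))
            - degProd G α e * Real.log (randic G α)) / randic G α := by
      intro e he
      rw [degProd_eq_rpow, Real.log_div (Real.rpow_pos_of_pos (hbpos e) α).ne' (hRpos α).ne',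
        Real.log_rpow (hbpos e)]
      field_simp
    rw [edgeEntropy, Finset.sum_congr rfl key, ← Finset.sum_div, Finset.sum_sub_distrib,
      ← Finset.mul_sum, ← Finset.sum_mul, ← hR', ← randic]
    rw [sub_div, neg_sub, mul_div_cancel_left₀ _ (hRpos α).ne', mul_div_assoc]
  have hHV : vertexEntropy G α = Real.log (vertexSum G α) - α * (S' / vertexSum G α) := by
    have key : ∀ v : V,
        ((G.degree v : ℝ) ^ (2 * α) / vertexSum G α) *
            Real.log ((G.degree v : ℝ) ^ (2 * α) / vertexSum G α) =
          (α * ((G.degree v : ℝ) ^ (2 * α) * (2 * Real.log (G.degree v)))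
            - (G.degree v : ℝ) ^ (2 * α) * Real.log (vertexSum G α)) / vertexSum G α := by
      intro v
      rw [Real.log_div (Real.rpow_pos_of_pos (hdpos v) _).ne' (hSpos α).ne',
        Real.log_rpow (hdpos v)]
      field_simp
    rw [vertexEntropy]
    simp_rw [key]
    rw [← Finset.sum_div, Finset.sum_sub_distrib, ← Finset.mul_sum, ← Finset.sum_mul,
      ← hS', ← vertexSum]
    rw [sub_div, neg_sub, mul_div_cancel_left₀ _ (hSpos α).ne', mul_div_assoc]
  convert hmain using 1
  rw [normRandic, Real.log_div (hRpos α).ne' (hSpos α).ne', hHE, hHV]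
  field_simp
  ring
end

section
/- If the normalized Randić function R̄_α of a finite simple connected graph attains a local maximum at α* ≠ 0, then log R̄_{α*} = H_E^{α*} − H_V^{α*}, the difference of the Shannon entropies of the degree-based edge and vertex distributions at parameter α*. -/
open Finset

variable {V : Type*}

section Aux

variable [Fintype V] (G : SimpleGraph V) [DecidableRel G.Adj]

lemma degProd_mk (α : ℝ) (u v : V) :
    degProd G α s(u, v) = ((G.degree u : ℝ) * (G.degree v : ℝ)) ^ α := rfl

lemma degProd_pos (hdeg : ∀ v : V, 1 ≤ G.degree v) (α : ℝ) (e : Sym2 V) :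
    0 < degProd G α e := by
  induction e using Sym2.ind with
  | _ u v =>
    have hu : (0 : ℝ) < G.degree u := by exact_mod_cast (hdeg u)
    have hv : (0 : ℝ) < G.degree v := by exact_mod_cast (hdeg v)
    rw [degProd_mk]
    exact Real.rpow_pos_of_pos (mul_pos hu hv) α

lemma log_degProd (hdeg : ∀ v : V, 1 ≤ G.degree v) (α : ℝ) (e : Sym2 V) :
    Real.log (degProd G α e) = α * Real.log (degProd G 1 e) := by
  induction e using Sym2.ind with
  | _ u v =>
    have hu : (0 : ℝ) < G.degree u := by exact_mod_cast (hdeg u)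
    have hv : (0 : ℝ) < G.degree v := by exact_mod_cast (hdeg v)
    rw [degProd_mk, degProd_mk, Real.rpow_one, Real.log_rpow (mul_pos hu hv)]

lemma hasDerivAt_degProd (hdeg : ∀ v : V, 1 ≤ G.degree v) (α : ℝ) (e : Sym2 V) :
    HasDerivAt (fun a => degProd G a e)
      (degProd G α e * Real.log (degProd G 1 e)) α := by
  induction e using Sym2.ind with
  | _ u v =>
    have hu : (0 : ℝ) < G.degree u := by exact_mod_cast (hdeg u)
    have hv : (0 : ℝ) < G.degree v := by exact_mod_cast (hdeg v)
    simp only [degProd_mk, Real.rpow_one]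
    exact (Real.hasStrictDerivAt_const_rpow (mul_pos hu hv) α).hasDerivAt

lemma hasDerivAt_pow2 (hdeg : ∀ v : V, 1 ≤ G.degree v) (α : ℝ) (v : V) :
    HasDerivAt (fun a : ℝ => (G.degree v : ℝ) ^ (2 * a))
      ((G.degree v : ℝ) ^ (2 * α) * Real.log (G.degree v) * 2) α := by
  have hv : (0 : ℝ) < G.degree v := by exact_mod_cast (hdeg v)
  have h1 := (Real.hasStrictDerivAt_const_rpow hv (2 * α)).hasDerivAt
  have h2 : HasDerivAt (fun a : ℝ => 2 * a) 2 α := by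
    simpa using (hasDerivAt_id α).const_mul (2 : ℝ)
  exact h1.comp α h2

end Aux

theorem log_normalized_randic_at_local_max
    [Fintype V] [DecidableEq V] [Nonempty V] (G : SimpleGraph V) [DecidableRel G.Adj]
    (hconn : G.Connected) (hE : G.edgeFinset.Nonempty) (hdeg : ∀ v : V, 1 ≤ G.degree v)
    (αstar : ℝ) (hα : αstar ≠ 0)
    (hmax : IsLocalMax (fun a : ℝ => normRandic G a) αstar) :
    Real.log (normRandic G αstar) = edgeEntropy G αstar - vertexEntropy G αstar := by
  classical
  set R := randic G αstar with hRdef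
  set S := vertexSum G αstar with hSdef
  set Rd := ∑ e ∈ G.edgeFinset, degProd G αstar e * Real.log (degProd G 1 e) with hRddef
  set Sd := ∑ v : V, (G.degree v : ℝ) ^ (2 * αstar) * Real.log (G.degree v) * 2 with hSddef
  have hRpos : 0 < R := Finset.sum_pos (fun e _ => degProd_pos G hdeg αstar e) hE
  have hSpos : 0 < S := by
    refine Finset.sum_pos (fun v _ => ?_) Finset.univ_nonempty
    have hv : (0 : ℝ) < G.degree v := by exact_mod_cast (hdeg v)
    exact Real.rpow_pos_of_pos hv _
  have hR : HasDerivAt (fun a => randic G a) Rd αstar :=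
    HasDerivAt.fun_sum fun e _ => hasDerivAt_degProd G hdeg αstar e
  have hS : HasDerivAt (fun a => vertexSum G a) Sd αstar :=
    HasDerivAt.fun_sum fun v _ => hasDerivAt_pow2 G hdeg αstar v
  have hquot : HasDerivAt (fun a : ℝ => normRandic G a) ((Rd * S - R * Sd) / S ^ 2) αstar :=
    hR.div hS (ne_of_gt hSpos)
  have h0 : (Rd * S - R * Sd) / S ^ 2 = 0 := hmax.hasDerivAt_eq_zero hquot
  have hkey : Rd * S = R * Sd := by
    have hS2 : S ^ 2 ≠ 0 := pow_ne_zero 2 (ne_of_gt hSpos)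
    have := (div_eq_zero_iff.mp h0).resolve_right hS2
    linarith
  have hratio : Rd / R = Sd / S := by
    field_simp
    linarith [hkey]
  have hEent : edgeEntropy G αstar = Real.log R - αstar * (Rd / R) := by
    unfold edgeEntropy
    have hterm : ∀ e ∈ G.edgeFinset,
        (degProd G αstar e / randic G αstar) * Real.log (degProd G αstar e / randic G αstar)
          = αstar / R * (degProd G αstar e * Real.log (degProd G 1 e))
            - Real.log R / R * degProd G αstar e := by
      intro e _
      rw [Real.log_div (ne_of_gt (degProd_pos G hdeg αstar e)) (ne_of_gt hRpos),
        log_degProd G hdeg αstar e]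
      rw [← hRdef]
      ring
    rw [Finset.sum_congr rfl hterm, Finset.sum_sub_distrib, ← Finset.mul_sum, ← Finset.mul_sum]
    rw [← hRddef]
    have hsum : ∑ e ∈ G.edgeFinset, degProd G αstar e = R := rfl
    rw [hsum]
    field_simp
    ring
  have hVent : vertexEntropy G αstar = Real.log S - αstar * (Sd / S) := by
    unfold vertexEntropy
    have hterm : ∀ v ∈ (Finset.univ : Finset V),
        ((G.degree v : ℝ) ^ (2 * αstar) / vertexSum G αstar) *
            Real.log ((G.degree v : ℝ) ^ (2 * αstar) / vertexSum G αstar)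
          = αstar / S * ((G.degree v : ℝ) ^ (2 * αstar) * Real.log (G.degree v) * 2)
            - Real.log S / S * (G.degree v : ℝ) ^ (2 * αstar) := by
      intro v _
      have hv : (0 : ℝ) < G.degree v := by exact_mod_cast (hdeg v)
      rw [Real.log_div (ne_of_gt (Real.rpow_pos_of_pos hv _)) (ne_of_gt hSpos),
        Real.log_rpow hv]
      rw [← hSdef]
      ring
    rw [Finset.sum_congr rfl hterm, Finset.sum_sub_distrib, ← Finset.mul_sum, ← Finset.mul_sum]
    rw [← hSddef]
    have hsum : ∑ v : V, (G.degree v : ℝ) ^ (2 * αstar) = S := rfl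
    rw [hsum]
    field_simp
    ring
  have hlog : Real.log (normRandic G αstar) = Real.log R - Real.log S := by
    unfold normRandic
    rw [← hRdef, ← hSdef, Real.log_div (ne_of_gt hRpos) (ne_of_gt hSpos)]
  rw [hlog, hEent, hVent, hratio]
  ring
end
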